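/- In the multigraph on vertices {1,2,3,4} with edges {12, 13, 14, 23, 24, 34, 14', 24', 34'} (where 14' is parallel to 14, etc.), the edge set can be partitioned into three spanning trees, but there is no partition into three spanning trees T_1, T_2, T_3 such that each of the sets {14, 14', 23}, {24, 24', 13}, {34, 34', 12} has exactly one edge in each T_j. -/

import Mathlib

open Set Function Matroid SimpleGraph

/-- The endpoint map of McDiarmid's multigraph: `K₄` on `{0,1,2,3}` (vertex `3`
playing the role of vertex `4`) with the three edges at vertex `3` duplicated.
Edges `0..8` are `12, 13, 14, 23, 24, 34, 14', 24', 34'`. -/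
def mcdEnds : Fin 9 → Sym2 (Fin 4) :=
  ![s(0, 1), s(0, 2), s(0, 3), s(1, 2), s(1, 3), s(2, 3), s(0, 3), s(1, 3), s(2, 3)]

/-- A set of multigraph edges is acyclic: no two parallel edges, and the
underlying simple graph is acyclic. -/
def McdAcyclic (S : Set (Fin 9)) : Prop :=
  Set.InjOn mcdEnds S ∧ (SimpleGraph.fromEdgeSet (mcdEnds '' S)).IsAcyclic

/-- A spanning tree of McDiarmid's multigraph (as a set of edges). -/
def McdSpanningTree (T : Set (Fin 9)) : Prop :=
  McdAcyclic T ∧ (SimpleGraph.fromEdgeSet (mcdEnds '' T)).Connected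

/-- The row sets `I₁ = {14, 14', 23}`, `I₂ = {24, 24', 13}`, `I₃ = {34, 34', 12}`. -/
def mcdRows : Fin 3 → Set (Fin 9) :=
  ![{2, 6, 3}, {4, 7, 1}, {5, 8, 0}]

instance mcdDAdj (s : Set (Sym2 (Fin 4))) [DecidablePred (· ∈ s)] :
    DecidableRel (fromEdgeSet s).Adj :=
  fun a b => decidable_of_iff (s(a, b) ∈ s ∧ a ≠ b) (fromEdgeSet_adj _).symm

lemma mcd_acyclic_of_bridges {V : Type*} (G : SimpleGraph V)
    (h : ∀ v w, G.Adj v w → ¬ (G \ fromEdgeSet {s(v, w)}).Reachable v w) : G.IsAcyclic := by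
  rw [isAcyclic_iff_forall_adj_isBridge]
  intro v w hvw
  rw [isBridge_iff]
  exact h v w hvw

lemma mcd_tree (S : Set (Fin 9)) (es : Set (Sym2 (Fin 4))) [DecidablePred (· ∈ es)]
    (hinj : Set.InjOn mcdEnds S) (himg : mcdEnds '' S = es)
    (hb : ∀ v w, (fromEdgeSet es).Adj v w →
      ¬ ((fromEdgeSet es) \ fromEdgeSet {s(v, w)}).Reachable v w)
    (hc : (fromEdgeSet es).Preconnected) : McdSpanningTree S := by
  refine ⟨⟨hinj, ?_⟩, ?_⟩ <;> rw [himg]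
  · exact mcd_acyclic_of_bridges _ hb
  · exact (connected_iff _).mpr ⟨hc, ⟨0⟩⟩

lemma mcd_triangle_not_acyclic {V : Type*} {G : SimpleGraph V} {u v w : V}
    (huv : G.Adj u v) (hvw : G.Adj v w) (hwu : G.Adj w u) : ¬ G.IsAcyclic := by
  intro h
  refine h (Walk.cons huv (Walk.cons hvw (Walk.cons hwu Walk.nil))) ?_
  have h1 := huv.ne
  have h2 := hvw.ne
  have h3 := hwu.ne
  rw [Walk.isCycle_def]
  refine ⟨?_, by simp, ?_⟩
  · simp [Walk.isTrail_def, Sym2.eq_iff]; tauto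
  · simp; tauto

/-- The "odd" representative of each row: `23`, `13`, `12`. -/
def mcdOdd : Fin 3 → Fin 9 := ![3, 1, 0]

/-- The multigraph's edge set can be partitioned into three spanning trees, but
never so that each of the three sets `{14,14',23}, {24,24',13}, {34,34',12}`
has exactly one edge in each tree. -/
theorem mcdiarmid_trees :
    (∃ T : Fin 3 → Set (Fin 9), (∀ j, McdSpanningTree (T j)) ∧
      Pairwise (Function.onFun Disjoint T) ∧ (⋃ j, T j) = univ) ∧
    ¬ ∃ T : Fin 3 → Set (Fin 9), (∀ j, McdSpanningTree (T j)) ∧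
        Pairwise (Function.onFun Disjoint T) ∧ (⋃ j, T j) = univ ∧
        ∀ i j, (mcdRows i ∩ T j).ncard = 1 := by
  constructor
  · -- existence of a partition into three spanning trees
    have inj : ∀ s : Set (Fin 9), (∀ a ∈ s, ∀ b ∈ s, mcdEnds a = mcdEnds b → a = b) →
        Set.InjOn mcdEnds s := fun s h a ha b hb => h a ha b hb
    refine ⟨![{0, 1, 4}, {2, 3, 8}, {5, 6, 7}], ?_, ?_, ?_⟩
    · intro j
      fin_cases j
      · exact mcd_tree {0, 1, 4} {s(0, 1), s(0, 2), s(1, 3)}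
          (inj _ (by decide))
          (by simp only [Set.image_insert_eq, Set.image_singleton,
                show mcdEnds 0 = s(0, 1) from rfl, show mcdEnds 1 = s(0, 2) from rfl,
                show mcdEnds 4 = s(1, 3) from rfl])
          (by decide) (by decide)
      · exact mcd_tree {2, 3, 8} {s(0, 3), s(1, 2), s(2, 3)}
          (inj _ (by decide))
          (by simp only [Set.image_insert_eq, Set.image_singleton,
                show mcdEnds 2 = s(0, 3) from rfl, show mcdEnds 3 = s(1, 2) from rfl,
                show mcdEnds 8 = s(2, 3) from rfl])
          (by decide) (by decide)
      · exact mcd_tree {5, 6, 7} {s(2, 3), s(0, 3), s(1, 3)}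
          (inj _ (by decide))
          (by simp only [Set.image_insert_eq, Set.image_singleton,
                show mcdEnds 5 = s(2, 3) from rfl, show mcdEnds 6 = s(0, 3) from rfl,
                show mcdEnds 7 = s(1, 3) from rfl])
          (by decide) (by decide)
    · have d01 : Disjoint ({0, 1, 4} : Set (Fin 9)) ({2, 3, 8} : Set (Fin 9)) := by
        rw [Set.disjoint_left]; decide
      have d02 : Disjoint ({0, 1, 4} : Set (Fin 9)) ({5, 6, 7} : Set (Fin 9)) := by
        rw [Set.disjoint_left]; decide
      have d12 : Disjoint ({2, 3, 8} : Set (Fin 9)) ({5, 6, 7} : Set (Fin 9)) := by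
        rw [Set.disjoint_left]; decide
      intro i j hij
      fin_cases i <;> fin_cases j <;>
        first
          | exact absurd rfl hij
          | exact d01 | exact d01.symm | exact d02 | exact d02.symm
          | exact d12 | exact d12.symm
    · rw [Set.eq_univ_iff_forall]
      intro x
      fin_cases x <;>
        first
          | exact Set.mem_iUnion.mpr ⟨0, by show _ ∈ ({0, 1, 4} : Set (Fin 9)); decide⟩
          | exact Set.mem_iUnion.mpr ⟨1, by show _ ∈ ({2, 3, 8} : Set (Fin 9)); decide⟩
          | exact Set.mem_iUnion.mpr ⟨2, by show _ ∈ ({5, 6, 7} : Set (Fin 9)); decide⟩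
  · -- no partition compatible with the rows
    rintro ⟨T, htree, hdisj, hunion, hcard⟩
    classical
    set b : Fin 3 → Fin 3 → ZMod 2 := fun i j => if mcdOdd i ∈ T j then 1 else 0 with hb
    -- each odd edge is in exactly one tree
    have claimA : ∀ i, ∑ j, b i j = 1 := by
      intro i
      have hmem : mcdOdd i ∈ ⋃ j, T j := hunion ▸ Set.mem_univ _
      obtain ⟨j₀, hj₀⟩ := Set.mem_iUnion.mp hmem
      rw [Finset.sum_eq_single j₀]
      · simp [hb, hj₀]
      · intro j _ hne
        have : mcdOdd i ∉ T j := fun hm => Set.disjoint_left.mp (hdisj hne) hm hj₀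
        simp [hb, this]
      · exact fun h => absurd (Finset.mem_univ _) h
    -- each tree contains an even number of odd edges
    have claimB : ∀ j, ∑ i, b i j = 0 := by
      intro j
      have hA : (fromEdgeSet (mcdEnds '' T j)).IsAcyclic := (htree j).1.2
      set G := fromEdgeSet (mcdEnds '' T j) with hG
      have adj : ∀ x y : Fin 4, x ≠ y → s(x, y) ∈ mcdEnds '' T j → G.Adj x y :=
        fun x y hne hm => (fromEdgeSet_adj _).mpr ⟨hm, hne⟩
      have row : ∀ i : Fin 3,
          (mcdOdd i ∈ T j → mcdEnds (mcdOdd i) ∈ mcdEnds '' T j) ∧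
          (mcdOdd i ∉ T j →
            (![s(0, 3), s(1, 3), s(2, 3)] : Fin 3 → Sym2 (Fin 4)) i ∈ mcdEnds '' T j) := by
        intro i
        constructor
        · exact fun h => Set.mem_image_of_mem _ h
        · intro h
          obtain ⟨a, ha⟩ := Set.ncard_eq_one.mp (hcard i j)
          have ham : a ∈ mcdRows i ∩ T j := by rw [ha]; rfl
          have hane : a ≠ mcdOdd i := fun he => h (he ▸ ham.2)
          refine ⟨a, ham.2, ?_⟩
          have hr := ham.1
          fin_cases i <;>
            · simp only [mcdRows, mcdOdd, Matrix.cons_val_zero, Matrix.cons_val_one,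
                Matrix.head_cons, Set.mem_insert_iff, Set.mem_singleton_iff] at hr hane ⊢
              rcases hr with rfl | rfl | rfl <;> first | rfl | exact absurd rfl hane
      by_cases h0 : mcdOdd 0 ∈ T j <;> by_cases h1 : mcdOdd 1 ∈ T j <;>
        by_cases h2 : mcdOdd 2 ∈ T j
      · -- 23, 13, 12 : triangle 0-1-2
        exact absurd hA (mcd_triangle_not_acyclic
          (adj 0 1 (by decide) ((row 2).1 h2))
          (adj 1 2 (by decide) ((row 0).1 h0))
          ((adj 0 2 (by decide) ((row 1).1 h1)).symm))
      · rw [Fin.sum_univ_three]; simp [hb, h0, h1, h2]; try decide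
      · rw [Fin.sum_univ_three]; simp [hb, h0, h1, h2]; try decide
      · -- 23, 24, 34 : triangle 1-2-3
        exact absurd hA (mcd_triangle_not_acyclic
          (adj 1 2 (by decide) ((row 0).1 h0))
          (adj 2 3 (by decide) ((row 2).2 h2))
          ((adj 1 3 (by decide) ((row 1).2 h1)).symm))
      · rw [Fin.sum_univ_three]; simp [hb, h0, h1, h2]; try decide
      · -- 14, 13, 34 : triangle 0-3-2
        exact absurd hA (mcd_triangle_not_acyclic
          (adj 0 3 (by decide) ((row 0).2 h0))
          ((adj 2 3 (by decide) ((row 2).2 h2)).symm)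
          ((adj 0 2 (by decide) ((row 1).1 h1)).symm))
      · -- 14, 24, 12 : triangle 0-3-1
        exact absurd hA (mcd_triangle_not_acyclic
          (adj 0 3 (by decide) ((row 0).2 h0))
          ((adj 1 3 (by decide) ((row 1).2 h1)).symm)
          ((adj 0 1 (by decide) ((row 2).1 h2)).symm))
      · rw [Fin.sum_univ_three]; simp [hb, h0, h1, h2]
    have key : (0 : ZMod 2) = ∑ i, ∑ j, b i j := by
      rw [← Finset.sum_comm]
      simp [claimB]
    rw [Fin.sum_univ_three, claimA, claimA, claimA] at key
    exact absurd key (by decide)
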